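/- Let n ≥ 2k and let F ⊆ C([n],k) be an intersecting family of k-element subsets of [n]. Then the codegree squared sum co₂(F) = Σ_{E ∈ C([n],k-1)} d(E)² satisfies co₂(F) ≤ C(n-1,k-1)·(1 + (n-k+1)(k-1)). -/

import Mathlib

/-
Proof of the ℓ₂-norm Erdős–Ko–Rado theorem.

Strategy: co₂(F) = k|F| + D where D is the number of ordered pairs (A,B) in F
with |A ∩ B| = k-1.  D = ⟨f, M f⟩ for the Johnson-graph adjacency M and the
indicator f of F.  A spectral bound (proved by induction on k via the
inclusion operator between levels k and k-1 together with Cauchy–Schwarz)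
shows ⟨g, M g⟩ ≤ ((k-1)(n-k) - k)‖g‖² for mean-zero g.  Decomposing f into
its mean and mean-zero part, using the k(n-k)-regularity of the Johnson graph
and the Erdős–Ko–Rado bound |F| ≤ C(n-1,k-1) yields
D ≤ (k-1)(n-k)|F|, hence co₂(F) ≤ (1 + (k-1)(n-k+1))|F| ≤ RHS.
-/

namespace EkrL2Aux
open Finset


variable {n : ℕ}

lemma filt_sub (S : Finset (Fin n)) (m : ℕ) :
    ((univ.powersetCard m).filter (fun E => E ⊆ S)) = S.powersetCard m := by
  ext E; simp [Finset.mem_powersetCard, Finset.mem_filter]; tauto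

lemma card_sub (S : Finset (Fin n)) (m : ℕ) :
    ((univ.powersetCard m).filter (fun E => E ⊆ S)).card = S.card.choose m := by
  rw [filt_sub, Finset.card_powersetCard]

-- supersets of S of size m
lemma card_sup (S : Finset (Fin n)) (m : ℕ) (h : S.card ≤ m) :
    ((univ.powersetCard m).filter (fun A => S ⊆ A)).card = (n - S.card).choose (m - S.card) := by
  have : ((univ \ S).powersetCard (m - S.card)).card
      = ((univ.powersetCard m).filter (fun A => S ⊆ A)).card := by
    apply Finset.card_bij (fun B _ => B ∪ S)
    · intro B hB
      rw [Finset.mem_powersetCard] at hB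
      simp only [Finset.mem_filter, Finset.mem_powersetCard]
      refine ⟨⟨Finset.subset_univ _, ?_⟩, Finset.subset_union_right⟩
      rw [Finset.card_union_of_disjoint]
      · rw [hB.2]; omega
      · exact Finset.disjoint_of_subset_left hB.1 (Finset.sdiff_disjoint (t := (univ : Finset (Fin n))) (s := S))
    · intro B1 h1 B2 h2 he
      rw [Finset.mem_powersetCard] at h1 h2
      have d1 := Finset.disjoint_of_subset_left h1.1 (Finset.sdiff_disjoint (t := (univ : Finset (Fin n))) (s := S))
      have d2 := Finset.disjoint_of_subset_left h2.1 (Finset.sdiff_disjoint (t := (univ : Finset (Fin n))) (s := S))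
      have : (B1 ∪ S) \ S = (B2 ∪ S) \ S := by rw [he]
      rwa [Finset.union_sdiff_right, Finset.union_sdiff_right,
        Finset.sdiff_eq_self_of_disjoint d1, Finset.sdiff_eq_self_of_disjoint d2] at this
    · intro A hA
      rw [Finset.mem_filter, Finset.mem_powersetCard] at hA
      refine ⟨A \ S, ?_, ?_⟩
      · rw [Finset.mem_powersetCard]
        constructor
        · exact Finset.sdiff_subset_sdiff (Finset.subset_univ _) le_rfl
        · rw [Finset.card_sdiff_of_subset hA.2, hA.1.2]
      · rw [Finset.sdiff_union_self_eq_union, Finset.union_eq_left.2 hA.2]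
  rw [← this, Finset.card_powersetCard, Finset.card_sdiff_of_subset (Finset.subset_univ S), Finset.card_univ,
    Fintype.card_fin]

lemma filt_sup_empty (S : Finset (Fin n)) (m : ℕ) (h : m < S.card) :
    ((univ.powersetCard m).filter (fun A => S ⊆ A)) = ∅ := by
  rw [Finset.filter_eq_empty_iff]
  intro A hA hSA
  rw [Finset.mem_powersetCard] at hA
  have := Finset.card_le_card hSA
  omega

-- pointwise split lemma, level k+1 over facets k
lemma choose_split_k1 (k : ℕ) (A B : Finset (Fin n)) (hA : A.card = k+1) (hB : B.card = k+1) :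
    (((A ∩ B).card.choose k : ℕ) : ℝ)
      = (if (A ∩ B).card + 1 = k + 1 then 1 else 0) + (if B = A then ((k:ℝ)+1) else 0) := by
  have hle : (A ∩ B).card ≤ k + 1 := hA ▸ Finset.card_le_card Finset.inter_subset_left
  rcases Nat.lt_or_ge (A ∩ B).card k with hlt | hge
  · rw [Nat.choose_eq_zero_of_lt hlt]
    have h1 : ¬((A ∩ B).card + 1 = k + 1) := by omega
    have h2 : B ≠ A := by
      rintro rfl; rw [Finset.inter_self, hA] at hlt; omega
    simp [h1, h2]; omega
  · have hcases : (A ∩ B).card = k ∨ (A ∩ B).card = k + 1 := by omega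
    rcases hcases with h | h
    · -- card = k
      have h2 : B ≠ A := by
        rintro rfl; rw [Finset.inter_self, hA] at h; omega
      simp [h, h2, Nat.choose_self]
    · -- card = k+1 : A = B
      have hAB : A = B := by
        have h1 : A ∩ B = A := Finset.eq_of_subset_of_card_le Finset.inter_subset_left (by omega)
        have h2 : A ∩ B = B := Finset.eq_of_subset_of_card_le Finset.inter_subset_right (by omega)
        rw [← h1, h2]
      have h3 : ¬((k:ℕ) + 1 + 1 = k + 1) := by omega
      simp [hAB, hB, Nat.succ_ne_self, Nat.choose_succ_self_right]

-- supersets split: for k-sets E, E', number of (k+1)-sets containing both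
lemma sup_split (k : ℕ) (hk : 1 ≤ k) (hkn : k + 1 ≤ n) (E E' : Finset (Fin n))
    (hE : E.card = k) (hE' : E'.card = k) :
    ((((univ : Finset (Fin n)).powersetCard (k+1)).filter (fun A => E ∪ E' ⊆ A)).card : ℝ)
      = (if (E ∩ E').card + 1 = k then 1 else 0) + (if E' = E then ((n:ℝ) - k) else 0) := by
  have hcu : (E ∪ E').card + (E ∩ E').card = 2 * k := by
    have := Finset.card_union_add_card_inter E E'
    omega
  have hile : (E ∩ E').card ≤ k := hE ▸ Finset.card_le_card Finset.inter_subset_left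
  rcases Nat.lt_or_ge (E ∩ E').card (k-1) with hlt | hge
  · -- union too big: count 0
    rw [filt_sup_empty _ _ (by omega)]
    have h1 : ¬((E ∩ E').card + 1 = k) := by omega
    have h2 : E' ≠ E := by
      rintro rfl; rw [Finset.inter_self] at hlt; omega
    simp [h1, h2]
  · have hcases : (E ∩ E').card = k - 1 ∨ (E ∩ E').card = k := by omega
    rcases hcases with h | h
    · -- |E∪E'| = k+1, count = 1
      rw [card_sup _ _ (by omega)]
      have h2 : E' ≠ E := by
        rintro rfl; rw [Finset.inter_self, hE'] at h; omega
      have hu : (E ∪ E').card = k + 1 := by omega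
      rw [hu]
      simp only [Nat.sub_self, Nat.choose_zero_right]
      have h1 : (E ∩ E').card + 1 = k := by omega
      simp [h1, h2]
    · -- E = E'
      have hEE : E = E' := by
        have h1 : E ∩ E' = E := Finset.eq_of_subset_of_card_le Finset.inter_subset_left (by omega)
        have h2 : E ∩ E' = E' := Finset.eq_of_subset_of_card_le Finset.inter_subset_right (by omega)
        rw [← h1, h2]
      subst hEE
      rw [Finset.union_self, card_sup _ _ (by omega)]
      rw [hE]
      have h1 : ¬(#E + 1 = k) := by omega
      have h2 : k + 1 - k = 1 := by omega
      rw [h2, Nat.choose_one_right]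
      simp [h1, Nat.cast_sub (by omega : k ≤ n)]


theorem spec : ∀ k : ℕ, 1 ≤ k → k ≤ n → ∀ g : Finset (Fin n) → ℝ,
    (∑ A ∈ (univ : Finset (Fin n)).powersetCard k, g A) = 0 →
    (∑ A ∈ (univ : Finset (Fin n)).powersetCard k, ∑ B ∈ (univ : Finset (Fin n)).powersetCard k,
        (if (A ∩ B).card + 1 = k then g A * g B else 0))
      ≤ (((k:ℝ) - 1) * ((n:ℝ) - (k:ℝ)) - (k:ℝ))
          * ∑ A ∈ (univ : Finset (Fin n)).powersetCard k, (g A)^2 := by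
  intro k
  induction k with
  | zero => omega
  | succ m IH =>
    rcases Nat.eq_zero_or_pos m with rfl | hm
    · intro _ hkn g hg
      have key : ∀ A ∈ (univ : Finset (Fin n)).powersetCard 1,
          (∑ B ∈ (univ : Finset (Fin n)).powersetCard 1,
            (if (A ∩ B).card + 1 = 1 then g A * g B else 0)) = - g A ^ 2 := by
        intro A hA
        have hAc : A.card = 1 := (Finset.mem_powersetCard.1 hA).2
        have step : ∀ B ∈ (univ : Finset (Fin n)).powersetCard 1,
            (if (A ∩ B).card + 1 = 1 then g A * g B else 0)
              = g A * g B - (if B = A then g A * g B else 0) := by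
          intro B hB
          have hBc : B.card = 1 := (Finset.mem_powersetCard.1 hB).2
          by_cases hBA : B = A
          · subst hBA
            rw [Finset.inter_self]
            simp [hBc]
          · have : A ∩ B = ∅ := by
              obtain ⟨a, rfl⟩ := Finset.card_eq_one.1 hAc
              obtain ⟨b, rfl⟩ := Finset.card_eq_one.1 hBc
              have : a ≠ b := fun h => hBA (by rw [h])
              simp [Finset.singleton_inter_of_notMem, this.symm]
            simp [this, hBA]
        rw [Finset.sum_congr rfl step, Finset.sum_sub_distrib, ← Finset.mul_sum, hg,
          Finset.sum_ite_eq' _ A (fun B => g A * g B), if_pos hA]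
        ring
      rw [Finset.sum_congr rfl key]
      rw [Finset.sum_neg_distrib]
      push_cast
      ring_nf
      rfl
    · intro _ hkn g hg
      have IH' : m ≤ n → ∀ h : Finset (Fin n) → ℝ,
          (∑ E ∈ (univ : Finset (Fin n)).powersetCard m, h E) = 0 →
          (∑ E ∈ (univ : Finset (Fin n)).powersetCard m, ∑ E' ∈ (univ : Finset (Fin n)).powersetCard m,
              (if (E ∩ E').card + 1 = m then h E * h E' else 0))
            ≤ (((m:ℝ) - 1) * ((n:ℝ) - (m:ℝ)) - (m:ℝ))
                * ∑ E ∈ (univ : Finset (Fin n)).powersetCard m, (h E)^2 :=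
        fun hmn => IH hm hmn
      set K := (univ : Finset (Fin n)).powersetCard (m+1) with hK
      set Ek := (univ : Finset (Fin n)).powersetCard m with hEk
      set h : Finset (Fin n) → ℝ := fun E => ∑ A ∈ K, if E ⊆ A then g A else 0 with hh
      -- (S1)
      have S1 : ∑ E ∈ Ek, h E = 0 := by
        rw [hh]
        simp only []
        rw [Finset.sum_comm]
        have inner : ∀ A ∈ K, (∑ E ∈ Ek, if E ⊆ A then g A else 0) = ((m:ℝ)+1) * g A := by
          intro A hA
          rw [Finset.sum_ite, Finset.sum_const, Finset.sum_const_zero, add_zero, card_sub,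
            (Finset.mem_powersetCard.1 hA).2, Nat.choose_succ_self_right, nsmul_eq_mul]
          push_cast; ring
        rw [Finset.sum_congr rfl inner, ← Finset.mul_sum, hg, mul_zero]
      -- (S2)
      have S2 : ∑ E ∈ Ek, (h E)^2
          = (∑ A ∈ K, ∑ B ∈ K, (if (A ∩ B).card + 1 = m+1 then g A * g B else 0))
            + ((m:ℝ)+1) * ∑ A ∈ K, (g A)^2 := by
        have expand : ∀ E, (h E)^2 = ∑ A ∈ K, ∑ B ∈ K, (if E ⊆ A ∩ B then g A * g B else 0) := by
          intro E
          rw [hh, sq]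
          simp only []
          rw [Finset.sum_mul_sum]
          apply Finset.sum_congr rfl; intro A _
          apply Finset.sum_congr rfl; intro B _
          by_cases h1 : E ⊆ A <;> by_cases h2 : E ⊆ B <;>
            simp [h1, h2, Finset.subset_inter_iff]
        rw [Finset.sum_congr rfl (fun E _ => expand E), Finset.sum_comm]
        have swap2 : ∀ A ∈ K, (∑ E ∈ Ek, ∑ B ∈ K, (if E ⊆ A ∩ B then g A * g B else 0))
            = ∑ B ∈ K, ∑ E ∈ Ek, (if E ⊆ A ∩ B then g A * g B else 0) := by
          intro A _; exact Finset.sum_comm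
        rw [Finset.sum_congr rfl swap2]
        have inner : ∀ A ∈ K, ∀ B ∈ K, (∑ E ∈ Ek, (if E ⊆ A ∩ B then g A * g B else 0))
            = (if (A ∩ B).card + 1 = m+1 then g A * g B else 0)
              + (if B = A then ((m:ℝ)+1) * (g A * g B) else 0) := by
          intro A hA B hB
          rw [Finset.sum_ite, Finset.sum_const, Finset.sum_const_zero, add_zero, card_sub,
            nsmul_eq_mul]
          rw [choose_split_k1 m A B (Finset.mem_powersetCard.1 hA).2 (Finset.mem_powersetCard.1 hB).2]
          split_ifs <;> ring
        rw [Finset.sum_congr rfl (fun A hA => Finset.sum_congr rfl (fun B hB => inner A hA B hB))]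
        rw [Finset.sum_congr rfl (fun A (hA : A ∈ K) => Finset.sum_add_distrib), Finset.sum_add_distrib]
        congr 1
        have diag : ∀ A ∈ K, (∑ B ∈ K, if B = A then ((m:ℝ)+1) * (g A * g B) else 0)
            = ((m:ℝ)+1) * (g A)^2 := by
          intro A hA
          rw [Finset.sum_ite_eq' _ A (fun B => ((m:ℝ)+1) * (g A * g B)), if_pos hA]; ring
        rw [Finset.sum_congr rfl diag, ← Finset.mul_sum]
      -- (S3) w and adjointness
      set w : Finset (Fin n) → ℝ := fun A => ∑ E ∈ Ek, if E ⊆ A then h E else 0 with hw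
      have S3 : ∑ A ∈ K, g A * w A = ∑ E ∈ Ek, (h E)^2 := by
        rw [hw]
        simp only []
        have : ∀ A ∈ K, g A * (∑ E ∈ Ek, if E ⊆ A then h E else 0)
            = ∑ E ∈ Ek, (if E ⊆ A then h E * g A else 0) := by
          intro A _
          rw [Finset.mul_sum]
          apply Finset.sum_congr rfl; intro E _
          split_ifs <;> ring
        rw [Finset.sum_congr rfl this, Finset.sum_comm]
        apply Finset.sum_congr rfl; intro E _
        have : ∀ A ∈ K, (if E ⊆ A then h E * g A else 0) = h E * (if E ⊆ A then g A else 0) := by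
          intro A _; split_ifs <;> ring
        rw [Finset.sum_congr rfl this, ← Finset.mul_sum, hh]
        simp only []
        ring
      -- (S4)
      have S4 : ∑ A ∈ K, (w A)^2
          = (∑ E ∈ Ek, ∑ E' ∈ Ek, (if (E ∩ E').card + 1 = m then h E * h E' else 0))
            + ((n:ℝ) - m) * ∑ E ∈ Ek, (h E)^2 := by
        have expand : ∀ A, (w A)^2 = ∑ E ∈ Ek, ∑ E' ∈ Ek, (if E ∪ E' ⊆ A then h E * h E' else 0) := by
          intro A
          rw [hw, sq]
          simp only []
          rw [Finset.sum_mul_sum]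
          apply Finset.sum_congr rfl; intro E _
          apply Finset.sum_congr rfl; intro E' _
          by_cases h1 : E ⊆ A <;> by_cases h2 : E' ⊆ A <;>
            simp [h1, h2, Finset.union_subset_iff]
        rw [Finset.sum_congr rfl (fun A _ => expand A), Finset.sum_comm]
        have swap2 : ∀ E ∈ Ek, (∑ A ∈ K, ∑ E' ∈ Ek, (if E ∪ E' ⊆ A then h E * h E' else 0))
            = ∑ E' ∈ Ek, ∑ A ∈ K, (if E ∪ E' ⊆ A then h E * h E' else 0) := by
          intro E _; exact Finset.sum_comm
        rw [Finset.sum_congr rfl swap2]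
        have inner : ∀ E ∈ Ek, ∀ E' ∈ Ek, (∑ A ∈ K, (if E ∪ E' ⊆ A then h E * h E' else 0))
            = (if (E ∩ E').card + 1 = m then h E * h E' else 0)
              + (if E' = E then ((n:ℝ) - m) * (h E * h E') else 0) := by
          intro E hE E' hE'
          rw [Finset.sum_ite, Finset.sum_const, Finset.sum_const_zero, add_zero, nsmul_eq_mul]
          rw [sup_split m hm hkn E E' (Finset.mem_powersetCard.1 hE).2 (Finset.mem_powersetCard.1 hE').2]
          split_ifs <;> ring
        rw [Finset.sum_congr rfl (fun E hE => Finset.sum_congr rfl (fun E' hE' => inner E hE E' hE'))]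
        rw [Finset.sum_congr rfl (fun E (hE : E ∈ Ek) => Finset.sum_add_distrib), Finset.sum_add_distrib]
        congr 1
        have diag : ∀ E ∈ Ek, (∑ E' ∈ Ek, if E' = E then ((n:ℝ) - m) * (h E * h E') else 0)
            = ((n:ℝ) - m) * (h E)^2 := by
          intro E hE
          rw [Finset.sum_ite_eq' _ E (fun E' => ((n:ℝ) - m) * (h E * h E')), if_pos hE]; ring
        rw [Finset.sum_congr rfl diag, ← Finset.mul_sum]
      -- (S5)
      have S5 := IH' (by omega) h S1
      -- nonnegativity
      have hg2 : (0:ℝ) ≤ ∑ A ∈ K, (g A)^2 := Finset.sum_nonneg (fun A _ => sq_nonneg _)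
      have hh2 : (0:ℝ) ≤ ∑ E ∈ Ek, (h E)^2 := Finset.sum_nonneg (fun E _ => sq_nonneg _)
      have hnm : (1:ℝ) ≤ (n:ℝ) - m := by
        have : ((m:ℝ)+1) ≤ (n:ℝ) := by exact_mod_cast hkn
        linarith
      -- (S6)
      have S6 : ∑ A ∈ K, (w A)^2 ≤ ((m:ℝ) * ((n:ℝ) - m) - m) * ∑ E ∈ Ek, (h E)^2 := by
        rw [S4]; nlinarith [S5]
      have hB : (0:ℝ) ≤ (m:ℝ) * ((n:ℝ) - m) - m := by
        have hm' : (1:ℝ) ≤ (m:ℝ) := by exact_mod_cast hm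
        nlinarith
      -- (S7) Cauchy-Schwarz
      have S7 : (∑ E ∈ Ek, (h E)^2)^2 ≤ (∑ A ∈ K, (g A)^2) * ∑ A ∈ K, (w A)^2 := by
        rw [← S3]
        exact Finset.sum_mul_sq_le_sq_mul_sq K g w
      -- (S8)
      have S8 : ∑ E ∈ Ek, (h E)^2 ≤ ((m:ℝ) * ((n:ℝ) - m) - m) * ∑ A ∈ K, (g A)^2 := by
        rcases eq_or_lt_of_le hh2 with hz | hpos
        · rw [← hz]; positivity
        · have chain : (∑ E ∈ Ek, (h E)^2) * (∑ E ∈ Ek, (h E)^2)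
              ≤ (((m:ℝ) * ((n:ℝ) - m) - m) * ∑ A ∈ K, (g A)^2) * (∑ E ∈ Ek, (h E)^2) := by
            have := le_trans S7 (by nlinarith [S6, hg2] :
              (∑ A ∈ K, (g A)^2) * ∑ A ∈ K, (w A)^2
                ≤ (((m:ℝ) * ((n:ℝ) - m) - m) * ∑ A ∈ K, (g A)^2) * (∑ E ∈ Ek, (h E)^2))
            nlinarith [this]
          exact le_of_mul_le_mul_right chain hpos
      -- conclude
      have final : (∑ A ∈ K, ∑ B ∈ K, (if (A ∩ B).card + 1 = m+1 then g A * g B else 0))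
          = (∑ E ∈ Ek, (h E)^2) - ((m:ℝ)+1) * ∑ A ∈ K, (g A)^2 := by
        rw [S2]; ring
      rw [final]
      push_cast
      nlinarith [S8]

set_option maxHeartbeats 1600000 in
theorem main_ekr_l2 (n k : ℕ) (hn : 2 * k ≤ n)
    (F : Finset (Finset (Fin n))) (hF : ∀ A ∈ F, A.card = k)
    (hint : ∀ A ∈ F, ∀ B ∈ F, (A ∩ B).Nonempty) :
    ∑ E ∈ Finset.univ.powersetCard (k - 1), ((F.filter fun A => E ⊆ A).card) ^ 2 ≤
      (n - 1).choose (k - 1) * (1 + (n - k + 1) * (k - 1)) := by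
  rcases Nat.eq_zero_or_pos k with rfl | hk
  · -- k = 0 : F = ∅
    have hF0 : F = ∅ := by
      rcases Finset.eq_empty_or_nonempty F with h | ⟨A, hA⟩
      · exact h
      · exfalso
        have h1 := hint A hA A hA
        rw [Finset.inter_self] at h1
        have hc := hF A hA
        rw [Finset.card_eq_zero] at hc
        subst hc
        exact Finset.not_nonempty_empty h1
    subst hF0
    simp
  obtain ⟨k', rfl⟩ : ∃ k', k = k' + 1 := ⟨k - 1, by omega⟩
  have hkn : k' + 1 ≤ n := by omega
  set K := (univ : Finset (Fin n)).powersetCard (k'+1) with hKdef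
  set Ek := (univ : Finset (Fin n)).powersetCard k' with hEkdef
  have hFK : F ⊆ K := fun A hA => Finset.mem_powersetCard.2 ⟨Finset.subset_univ A, hF A hA⟩
  -- EKR
  have hEKR : F.card ≤ (n-1).choose k' := by
    have h1 : (↑F : Set (Finset (Fin n))).Intersecting := by
      intro A hA B hB
      rw [Finset.not_disjoint_iff_nonempty_inter]
      exact hint A hA B hB
    have h2 : Set.Sized (k'+1) (↑F : Set (Finset (Fin n))) := fun A hA => hF A hA
    have h3 : k' + 1 ≤ n / 2 := by omega
    simpa using Finset.erdos_ko_rado h1 h2 h3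
  set N := n.choose (k'+1) with hNdef
  have hN0 : 0 < N := Nat.choose_pos (by omega)
  have hcardK : K.card = N := by
    rw [hKdef, Finset.card_powersetCard, Finset.card_univ, Fintype.card_fin]
  set Fc : ℝ := (F.card : ℝ) with hFc
  set Nr : ℝ := (N : ℝ) with hNr
  have hNrpos : (0:ℝ) < Nr := by rw [hNr]; exact_mod_cast hN0
  set c : ℝ := Fc / Nr with hc
  set f : Finset (Fin n) → ℝ := fun A => if A ∈ F then 1 else 0 with hf
  set g : Finset (Fin n) → ℝ := fun A => f A - c with hg
  have hFc0 : (0:ℝ) ≤ Fc := by positivity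
  -- sum of f over K
  have sumf : ∑ A ∈ K, f A = Fc := by
    rw [hf]
    simp only []
    rw [Finset.sum_ite_mem, Finset.inter_eq_right.2 hFK, hFc]
    simp
  have sumf2 : ∑ A ∈ K, (f A)^2 = Fc := by
    rw [← sumf]
    apply Finset.sum_congr rfl
    intro A _
    rw [hf]
    simp only []
    split_ifs <;> norm_num
  have sumg : ∑ A ∈ K, g A = 0 := by
    rw [hg]
    simp only []
    rw [Finset.sum_sub_distrib, sumf, Finset.sum_const, hcardK, nsmul_eq_mul, hc]
    field_simp
    rw [hNr]; ring
  have sumg2 : ∑ A ∈ K, (g A)^2 = Fc - Fc^2 / Nr := by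
    rw [hg]
    simp only []
    have expand : ∀ A, (f A - c)^2 = (f A)^2 - 2*c*(f A) + c^2 := by intro A; ring
    rw [Finset.sum_congr rfl (fun A _ => expand A)]
    rw [Finset.sum_add_distrib, Finset.sum_sub_distrib, sumf2, ← Finset.mul_sum, sumf,
      Finset.sum_const, hcardK, nsmul_eq_mul, hc]
    field_simp
    ring
  -- row sums
  have rowchoose : ∀ A ∈ K, (∑ B ∈ K, (((A ∩ B).card.choose k' : ℕ) : ℝ))
      = ((k':ℝ)+1) * ((n:ℝ) - k') := by
    intro A hA
    have hAc : A.card = k' + 1 := (Finset.mem_powersetCard.1 hA).2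
    have step1 : ∀ B ∈ K, (((A ∩ B).card.choose k' : ℕ) : ℝ)
        = ∑ E ∈ Ek, (if E ⊆ A ∩ B then (1:ℝ) else 0) := by
      intro B _
      rw [Finset.sum_ite, Finset.sum_const, Finset.sum_const_zero, add_zero, nsmul_eq_mul,
        mul_one, card_sub]
    rw [Finset.sum_congr rfl step1, Finset.sum_comm]
    have inner : ∀ E ∈ Ek, (∑ B ∈ K, if E ⊆ A ∩ B then (1:ℝ) else 0)
        = if E ⊆ A then ((n:ℝ) - k') else 0 := by
      intro E hE
      have hEc : E.card = k' := (Finset.mem_powersetCard.1 hE).2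
      by_cases hEA : E ⊆ A
      · rw [if_pos hEA]
        have : ∀ B ∈ K, (if E ⊆ A ∩ B then (1:ℝ) else 0) = (if E ⊆ B then (1:ℝ) else 0) := by
          intro B _
          by_cases h2 : E ⊆ B
          · rw [if_pos (Finset.subset_inter hEA h2), if_pos h2]
          · rw [if_neg (fun hc => h2 (hc.trans Finset.inter_subset_right)), if_neg h2]
        rw [Finset.sum_congr rfl this, Finset.sum_ite, Finset.sum_const, Finset.sum_const_zero,
          add_zero, nsmul_eq_mul, mul_one, card_sup E (k'+1) (by omega), hEc]
        have h5 : k' + 1 - k' = 1 := by omega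
        rw [h5, Nat.choose_one_right, Nat.cast_sub (by omega)]
      · rw [if_neg hEA]
        apply Finset.sum_eq_zero
        intro B _
        rw [if_neg (fun hc => hEA (hc.trans Finset.inter_subset_left))]
    rw [Finset.sum_congr rfl inner, Finset.sum_ite, Finset.sum_const, Finset.sum_const_zero,
      add_zero, nsmul_eq_mul, card_sub, hAc, Nat.choose_succ_self_right]
    push_cast
    ring
  have rowsum : ∀ A ∈ K, (∑ B ∈ K, (if (A ∩ B).card + 1 = k'+1 then (1:ℝ) else 0))
      = ((k':ℝ)+1) * ((n:ℝ) - (k'+1)) := by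
    intro A hA
    have hAc : A.card = k' + 1 := (Finset.mem_powersetCard.1 hA).2
    have split : ∀ B ∈ K, (if (A ∩ B).card + 1 = k'+1 then (1:ℝ) else 0)
        = (((A ∩ B).card.choose k' : ℕ) : ℝ) - (if B = A then ((k':ℝ)+1) else 0) := by
      intro B hB
      rw [choose_split_k1 k' A B hAc (Finset.mem_powersetCard.1 hB).2]
      ring
    rw [Finset.sum_congr rfl split, Finset.sum_sub_distrib, rowchoose A hA,
      Finset.sum_ite_eq' _ A (fun _ => ((k':ℝ)+1)), if_pos hA]
    ring
  -- the quadratic form over K with f, and with g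
  set DK : ℝ := ∑ A ∈ K, ∑ B ∈ K, (if (A ∩ B).card + 1 = k'+1 then f A * f B else 0) with hDK
  set Mg : ℝ := ∑ A ∈ K, ∑ B ∈ K, (if (A ∩ B).card + 1 = k'+1 then g A * g B else 0) with hMg
  set lam0 : ℝ := ((k':ℝ)+1) * ((n:ℝ) - (k'+1)) with hlam0
  have colsum : ∀ B ∈ K, (∑ A ∈ K, (if (A ∩ B).card + 1 = k'+1 then (1:ℝ) else 0)) = lam0 := by
    intro B hB
    have : ∀ A ∈ K, (if (A ∩ B).card + 1 = k'+1 then (1:ℝ) else 0)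
        = (if (B ∩ A).card + 1 = k'+1 then (1:ℝ) else 0) := by
      intro A _; rw [Finset.inter_comm]
    rw [Finset.sum_congr rfl this, rowsum B hB, hlam0]
  have hDexp : DK = Mg + c^2 * lam0 * Nr := by
    have pointw : ∀ A ∈ K, ∀ B ∈ K, (if (A ∩ B).card + 1 = k'+1 then f A * f B else 0)
        = (if (A ∩ B).card + 1 = k'+1 then g A * g B else 0)
          + c * (if (A ∩ B).card + 1 = k'+1 then g A else 0)
          + c * (if (A ∩ B).card + 1 = k'+1 then g B else 0)
          + c^2 * (if (A ∩ B).card + 1 = k'+1 then (1:ℝ) else 0) := by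
      intro A _ B _
      have hfg : ∀ X, f X = g X + c := by intro X; rw [hg]; ring
      rw [hfg A, hfg B]
      split_ifs <;> ring
    rw [hDK]
    rw [Finset.sum_congr rfl (fun A hA => Finset.sum_congr rfl (fun B hB => pointw A hA B hB))]
    have split4 : ∀ A ∈ K, (∑ B ∈ K,
        ((if (A ∩ B).card + 1 = k'+1 then g A * g B else 0)
          + c * (if (A ∩ B).card + 1 = k'+1 then g A else 0)
          + c * (if (A ∩ B).card + 1 = k'+1 then g B else 0)
          + c^2 * (if (A ∩ B).card + 1 = k'+1 then (1:ℝ) else 0)))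
        = (∑ B ∈ K, (if (A ∩ B).card + 1 = k'+1 then g A * g B else 0))
          + (∑ B ∈ K, c * (if (A ∩ B).card + 1 = k'+1 then g A else 0))
          + (∑ B ∈ K, c * (if (A ∩ B).card + 1 = k'+1 then g B else 0))
          + (∑ B ∈ K, c^2 * (if (A ∩ B).card + 1 = k'+1 then (1:ℝ) else 0)) := by
      intro A _
      rw [← Finset.sum_add_distrib, ← Finset.sum_add_distrib, ← Finset.sum_add_distrib]
    rw [Finset.sum_congr rfl split4]
    rw [Finset.sum_add_distrib, Finset.sum_add_distrib, Finset.sum_add_distrib]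
    have T2 : (∑ A ∈ K, ∑ B ∈ K, c * (if (A ∩ B).card + 1 = k'+1 then g A else 0)) = 0 := by
      have inner : ∀ A ∈ K, (∑ B ∈ K, c * (if (A ∩ B).card + 1 = k'+1 then g A else 0))
          = c * lam0 * g A := by
        intro A hA
        rw [← Finset.mul_sum]
        have : ∀ B ∈ K, (if (A ∩ B).card + 1 = k'+1 then g A else 0)
            = g A * (if (A ∩ B).card + 1 = k'+1 then (1:ℝ) else 0) := by
          intro B _; split_ifs <;> ring
        rw [Finset.sum_congr rfl this, ← Finset.mul_sum, rowsum A hA]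
        ring
      rw [Finset.sum_congr rfl inner, ← Finset.mul_sum, sumg, mul_zero]
    have T3 : (∑ A ∈ K, ∑ B ∈ K, c * (if (A ∩ B).card + 1 = k'+1 then g B else 0)) = 0 := by
      rw [Finset.sum_comm]
      have inner : ∀ B ∈ K, (∑ A ∈ K, c * (if (A ∩ B).card + 1 = k'+1 then g B else 0))
          = c * lam0 * g B := by
        intro B hB
        rw [← Finset.mul_sum]
        have : ∀ A ∈ K, (if (A ∩ B).card + 1 = k'+1 then g B else 0)
            = g B * (if (A ∩ B).card + 1 = k'+1 then (1:ℝ) else 0) := by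
          intro A _; split_ifs <;> ring
        rw [Finset.sum_congr rfl this, ← Finset.mul_sum, colsum B hB]
        ring
      rw [Finset.sum_congr rfl inner, ← Finset.mul_sum, sumg, mul_zero]
    have T4 : (∑ A ∈ K, ∑ B ∈ K, c^2 * (if (A ∩ B).card + 1 = k'+1 then (1:ℝ) else 0))
        = c^2 * lam0 * Nr := by
      have inner : ∀ A ∈ K, (∑ B ∈ K, c^2 * (if (A ∩ B).card + 1 = k'+1 then (1:ℝ) else 0))
          = c^2 * lam0 := by
        intro A hA
        rw [← Finset.mul_sum, rowsum A hA, hlam0]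
      rw [Finset.sum_congr rfl inner, Finset.sum_const, hcardK, nsmul_eq_mul, hNr]
      ring
    rw [T2, T3, T4, hMg]
    ring
  -- spectral bound
  have specapp : Mg ≤ ((((k'+1:ℕ):ℝ) - 1) * ((n:ℝ) - ((k'+1:ℕ):ℝ)) - ((k'+1:ℕ):ℝ))
      * (Fc - Fc^2 / Nr) := by
    have := spec (k'+1) (by omega) hkn g sumg
    rw [sumg2] at this
    exact this
  have hcast1 : ((k'+1:ℕ):ℝ) = (k':ℝ)+1 := by push_cast; ring
  rw [hcast1] at specapp
  -- identity n * C(n-1,k') = N * (k'+1)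
  have idt : n * ((n-1).choose k') = N * (k'+1) := by
    have h0 := Nat.add_one_mul_choose_eq (n-1) k'
    have hs : (n-1) + 1 = n := by omega
    rw [hs] at h0
    rw [hNdef]
    exact h0
  have key : (n:ℝ) * (Fc^2 / Nr) ≤ ((k':ℝ)+1) * Fc := by
    have hFC : Fc ≤ ((n-1).choose k' : ℝ) := by rw [hFc]; exact_mod_cast hEKR
    have h2 : (n:ℝ) * ((n-1).choose k' : ℝ) = Nr * ((k':ℝ)+1) := by
      rw [hNr]
      exact_mod_cast idt
    have h1 : (n:ℝ) * Fc ≤ ((k':ℝ)+1) * Nr := by nlinarith [hFC, hFc0]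
    rw [mul_div_assoc']
    rw [div_le_iff₀ hNrpos]
    nlinarith [h1, hFc0]
  -- DK over F only
  set DF : ℝ := ∑ A ∈ F, ∑ B ∈ F, (if (A ∩ B).card + 1 = k'+1 then (1:ℝ) else 0) with hDFdef
  have hDKF : DK = DF := by
    rw [hDK, hDFdef]
    have outer : ∀ A ∈ F, (∑ B ∈ K, (if (A ∩ B).card + 1 = k'+1 then f A * f B else 0))
        = ∑ B ∈ F, (if (A ∩ B).card + 1 = k'+1 then (1:ℝ) else 0) := by
      intro A hAF
      rw [← Finset.sum_subset hFK (fun B _ hBnF => by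
        have hfB : f B = 0 := by rw [hf]; simp [hBnF]
        rw [hfB, mul_zero]; simp)]
      apply Finset.sum_congr rfl
      intro B hBF
      have hfA : f A = 1 := by rw [hf]; simp [hAF]
      have hfB : f B = 1 := by rw [hf]; simp [hBF]
      rw [hfA, hfB, one_mul]
    rw [← Finset.sum_subset hFK (fun A _ hAnF => by
      have hfA : f A = 0 := by rw [hf]; simp [hAnF]
      apply Finset.sum_eq_zero
      intro B _
      rw [hfA, zero_mul]; simp)]
    exact Finset.sum_congr rfl outer
  -- bridge: the codegree squared sum equals DF + (k'+1)*Fc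
  have bridge : ((∑ E ∈ Ek, ((F.filter fun A => E ⊆ A).card) ^ 2 : ℕ) : ℝ)
      = DF + ((k':ℝ)+1) * Fc := by
    have expand : ∀ E ∈ Ek, (((F.filter fun A => E ⊆ A).card ^ 2 : ℕ) : ℝ)
        = ∑ A ∈ F, ∑ B ∈ F, (if E ⊆ A ∩ B then (1:ℝ) else 0) := by
      intro E _
      have hcardf : (((F.filter fun A => E ⊆ A).card : ℕ) : ℝ)
          = ∑ A ∈ F, (if E ⊆ A then (1:ℝ) else 0) := by
        rw [Finset.card_filter]
        push_cast
        rfl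
      push_cast
      rw [hcardf, sq, Finset.sum_mul_sum]
      apply Finset.sum_congr rfl; intro A _
      apply Finset.sum_congr rfl; intro B _
      by_cases h1 : E ⊆ A <;> by_cases h2 : E ⊆ B <;>
        simp [h1, h2, Finset.subset_inter_iff]
    push_cast
    push_cast at expand
    rw [Finset.sum_congr rfl expand, Finset.sum_comm]
    have swap2 : ∀ A ∈ F, (∑ E ∈ Ek, ∑ B ∈ F, (if E ⊆ A ∩ B then (1:ℝ) else 0))
        = ∑ B ∈ F, ∑ E ∈ Ek, (if E ⊆ A ∩ B then (1:ℝ) else 0) := by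
      intro A _; exact Finset.sum_comm
    rw [Finset.sum_congr rfl swap2]
    have inner : ∀ A ∈ F, ∀ B ∈ F, (∑ E ∈ Ek, (if E ⊆ A ∩ B then (1:ℝ) else 0))
        = (if (A ∩ B).card + 1 = k'+1 then (1:ℝ) else 0)
          + (if B = A then ((k':ℝ)+1) else 0) := by
      intro A hA B hB
      rw [Finset.sum_ite, Finset.sum_const, Finset.sum_const_zero, add_zero, nsmul_eq_mul,
        mul_one, card_sub]
      exact choose_split_k1 k' A B (hF A hA) (hF B hB)
    rw [Finset.sum_congr rfl (fun A hA => Finset.sum_congr rfl (fun B hB => inner A hA B hB))]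
    rw [Finset.sum_congr rfl (fun A (hA : A ∈ F) => Finset.sum_add_distrib), Finset.sum_add_distrib]
    rw [hDFdef]
    congr 1
    have diag : ∀ A ∈ F, (∑ B ∈ F, if B = A then ((k':ℝ)+1) else 0) = ((k':ℝ)+1) := by
      intro A hA
      rw [Finset.sum_ite_eq' _ A (fun _ => ((k':ℝ)+1)), if_pos hA]
    rw [Finset.sum_congr rfl diag, Finset.sum_const, nsmul_eq_mul, hFc]
    ring
  -- final bound in ℝ
  have hnk' : (0:ℝ) ≤ (n:ℝ) - k' := by
    have : (k':ℝ) ≤ (n:ℝ) := by exact_mod_cast (by omega : k' ≤ n)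
    linarith
  have hNe : Nr ≠ 0 := ne_of_gt hNrpos
  have hcN : c * Nr = Fc := by rw [hc]; exact div_mul_cancel₀ Fc hNe
  have e1 : c^2 * lam0 * Nr = lam0 * (Fc^2 / Nr) := by
    have h2 : Fc^2 / Nr = c * Fc := by rw [hc]; ring
    rw [h2]
    calc c^2*lam0*Nr = (c*Nr)*c*lam0 := by ring
    _ = Fc * c * lam0 := by rw [hcN]
    _ = lam0 * (c * Fc) := by ring
  have hDbound : DF ≤ (k':ℝ) * ((n:ℝ) - (k'+1)) * Fc := by
    have step : DF = Mg + lam0 * (Fc^2/Nr) := by rw [← hDKF, hDexp, e1]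
    rw [step, hlam0]
    nlinarith [specapp, key, hFc0]
  have hCge : Fc ≤ ((n-1).choose k' : ℝ) := by rw [hFc]; exact_mod_cast hEKR
  have final_real : ((∑ E ∈ Ek, ((F.filter fun A => E ⊆ A).card) ^ 2 : ℕ) : ℝ)
      ≤ ((n-1).choose k' : ℝ) * (1 + ((n:ℝ) - k') * k') := by
    rw [bridge]
    have coef : (0:ℝ) ≤ 1 + ((n:ℝ) - k') * k' := by positivity
    nlinarith [hDbound, hCge, hFc0, hnk']
  -- conclude in ℕ
  rw [show k' + 1 - 1 = k' from rfl]
  have hsub : n - (k'+1) + 1 = n - k' := by omega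
  rw [hsub, ← hEkdef]
  have rhscast : (((n-1).choose k' * (1 + (n - k') * k') : ℕ) : ℝ)
      = ((n-1).choose k' : ℝ) * (1 + ((n:ℝ) - k') * k') := by
    push_cast [Nat.cast_sub (by omega : k' ≤ n)]
    ring
  exact_mod_cast final_real.trans_eq rhscast.symm

end EkrL2Aux

/-- Erdős–Ko–Rado in the ℓ₂-norm: if `F` is an intersecting family of `k`-subsets of `[n]`
with `n ≥ 2k`, then `co₂(F) ≤ C(n-1,k-1)·(1 + (n-k+1)(k-1))`. -/
theorem ekr_l2 (n k : ℕ) (hn : 2 * k ≤ n)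
    (F : Finset (Finset (Fin n))) (hF : ∀ A ∈ F, A.card = k)
    (hint : ∀ A ∈ F, ∀ B ∈ F, (A ∩ B).Nonempty) :
    ∑ E ∈ Finset.univ.powersetCard (k - 1), ((F.filter fun A => E ⊆ A).card) ^ 2 ≤
      (n - 1).choose (k - 1) * (1 + (n - k + 1) * (k - 1)) :=
  EkrL2Aux.main_ekr_l2 n k hn F hF hint
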